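/- Let p ≠ q be odd primes, k ≥ 1 and n ≥ 1, and let B be a p^k-form of rank n with mod-p reduction B_red and reduction homomorphism π : O(B) → O(B_red). Then for every Sylow q-subgroup S of O(B), the restriction of π to S is injective and the image π(S) is a Sylow q-subgroup of O(B_red). -/

import Mathlib

open Matrix

variable {ι : Type*} [Fintype ι] [DecidableEq ι] {R : Type*} [CommRing R]

/-- The orthogonal group of a bilinear form given by the matrix `B`:
the subgroup of invertible matrices `A` with `Aᵀ * B * A = B`. -/
def OGroup (B : Matrix ι ι R) : Subgroup (Matrix ι ι R)ˣ where
  carrier := {A | ((A : (Matrix ι ι R)ˣ) : Matrix ι ι R)ᵀ * B * A = B}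
  one_mem' := by simp
  mul_mem' := by
    intro a b ha hb
    simp only [Set.mem_setOf_eq, Units.val_mul, Matrix.transpose_mul] at *
    calc ((b : Matrix ι ι R)ᵀ * (a : Matrix ι ι R)ᵀ) * B * ((a : Matrix ι ι R) * (b : Matrix ι ι R))
        = (b : Matrix ι ι R)ᵀ * ((a : Matrix ι ι R)ᵀ * B * (a : Matrix ι ι R)) * (b : Matrix ι ι R) := by
          simp only [Matrix.mul_assoc]
      _ = B := by rw [ha]; exact hb
  inv_mem' := by
    intro a ha
    simp only [Set.mem_setOf_eq] at *
    have h1 : ((a⁻¹ : (Matrix ι ι R)ˣ) : Matrix ι ι R)ᵀ * ((a : Matrix ι ι R)ᵀ * B * (a : Matrix ι ι R)) * ((a⁻¹ : (Matrix ι ι R)ˣ) : Matrix ι ι R) = B := by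
      calc ((a⁻¹ : (Matrix ι ι R)ˣ) : Matrix ι ι R)ᵀ * ((a : Matrix ι ι R)ᵀ * B * (a : Matrix ι ι R)) * ((a⁻¹ : (Matrix ι ι R)ˣ) : Matrix ι ι R)
          = ((a : Matrix ι ι R) * ((a⁻¹ : (Matrix ι ι R)ˣ) : Matrix ι ι R))ᵀ * B * ((a : Matrix ι ι R) * ((a⁻¹ : (Matrix ι ι R)ˣ) : Matrix ι ι R)) := by
            simp only [Matrix.transpose_mul, Matrix.mul_assoc]
        _ = B := by
            rw [← Units.val_mul, mul_inv_cancel]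
            simp
    rw [ha] at h1
    exact h1

lemma mem_OGroup_map {S : Type*} [CommRing S] (g : R →+* S)
    (B : Matrix ι ι R) (x : (Matrix ι ι R)ˣ) (hx : x ∈ OGroup B) :
    Units.map (g.mapMatrix : Matrix ι ι R →+* Matrix ι ι S).toMonoidHom x ∈
      OGroup (B.map g) := by
  have hx' : ((x : Matrix ι ι R))ᵀ * B * (x : Matrix ι ι R) = B := hx
  have h2 : ((x : Matrix ι ι R)ᵀ * B * (x : Matrix ι ι R)).map g = B.map g := by rw [hx']
  show (((x : Matrix ι ι R).map g)ᵀ) * B.map g * ((x : Matrix ι ι R).map g) = B.map g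
  rw [← Matrix.transpose_map, ← Matrix.map_mul, ← Matrix.map_mul]
  exact h2

/-- Mod-`p` reduction homomorphism `O(B) → O(B_red)`. -/
def redPi (p k : ℕ) (hk : k ≠ 0) {n : ℕ} (B : Matrix (Fin n) (Fin n) (ZMod (p ^ k))) :
    OGroup B →* OGroup (B.map (ZMod.castHom (dvd_pow_self p hk) (ZMod p))) :=
  MonoidHom.codRestrict
    ((Units.map ((ZMod.castHom (dvd_pow_self p hk) (ZMod p)).mapMatrix :
        Matrix (Fin n) (Fin n) (ZMod (p ^ k)) →+* Matrix (Fin n) (Fin n) (ZMod p)).toMonoidHom).comp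
      (OGroup B).subtype)
    (OGroup (B.map (ZMod.castHom (dvd_pow_self p hk) (ZMod p))))
    (fun x => mem_OGroup_map _ B x x.2)

/-! ### Auxiliary lemmas -/

lemma stmt9_key_identity {R : Type*} [CommRing R] {m : Type*} [Fintype m] [DecidableEq m]
    (Bm A X E : Matrix m m R) (c : R)
    (hA : Aᵀ * Bm * A = Bm + c • E) (hX : E + Bm * X + Xᵀ * Bm = 0) :
    (A * (1 + c • X))ᵀ * Bm * (A * (1 + c • X))
      = Bm + (c * c) • (E * X + Xᵀ * E + Xᵀ * Bm * X + c • (Xᵀ * E * X)) := by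
  have hE : E = 0 - Bm * X - Xᵀ * Bm := by rw [← hX]; abel
  have h1 : (A * (1 + c • X))ᵀ = (1 + c • Xᵀ) * Aᵀ := by
    rw [transpose_mul, transpose_add, transpose_one, transpose_smul]
  have h2 : (A * (1 + c • X))ᵀ * Bm * (A * (1 + c • X))
      = (1 + c • Xᵀ) * (Aᵀ * Bm * A) * (1 + c • X) := by
    rw [h1]; simp only [Matrix.mul_assoc]
  rw [h2, hA, hE]
  simp only [mul_add, add_mul, smul_mul_assoc, mul_smul_comm, smul_smul, sub_mul, mul_sub,
    smul_sub, smul_add, zero_sub, neg_mul, mul_neg, smul_neg, neg_neg, mul_one, one_mul,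
    Matrix.mul_assoc, zero_mul, mul_zero]
  module

lemma stmt9_dvd_aux {p : ℕ} {i : ℕ} (hi : 1 ≤ i) (m : ℕ) :
    p ^ (i + 1) ∣ p.choose (m + 1) * p ^ (i * (m + 1)) := by
  rcases Nat.eq_zero_or_pos m with h | h
  · subst h
    rw [Nat.choose_one_right, show i * (0 + 1) = i by ring, ← pow_succ']
  · have : i + 1 ≤ i * (m + 1) := by nlinarith
    exact Dvd.dvd.mul_left (pow_dvd_pow p this) _

lemma stmt9_one_add_pow_p {n p k : ℕ} (hp : p.Prime) (i : ℕ) (hi : 1 ≤ i)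
    (M : Matrix (Fin n) (Fin n) (ZMod (p ^ k))) :
    ∃ M', (1 + ((p : ZMod (p ^ k)) ^ i) • M) ^ p
      = 1 + ((p : ZMod (p ^ k)) ^ (i + 1)) • M' := by
  have hcomm : Commute (((p : ZMod (p ^ k)) ^ i) • M) (1 : Matrix (Fin n) (Fin n) (ZMod (p ^ k))) :=
    Commute.one_right _
  have hbin := hcomm.add_pow p
  rw [add_comm]
  refine ⟨∑ m ∈ Finset.range p,
    (((p.choose (m + 1) * p ^ (i * (m + 1))) / p ^ (i + 1) : ℕ) : ZMod (p ^ k)) • M ^ (m + 1), ?_⟩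
  rw [hbin, Finset.sum_range_succ']
  have h0 : ((((p : ZMod (p ^ k)) ^ i) • M) ^ 0 * (1:Matrix (Fin n) (Fin n) (ZMod (p ^ k))) ^ (p - 0)
      * ((p.choose 0 : ℕ) : Matrix (Fin n) (Fin n) (ZMod (p ^ k)))) = 1 := by
    simp
  rw [h0, add_comm]
  congr 1
  rw [Finset.smul_sum]
  refine Finset.sum_congr rfl fun m hm => ?_
  obtain ⟨d, hd⟩ := stmt9_dvd_aux hi m (p := p)
  have e1 : (((p : ZMod (p ^ k)) ^ i) • M) ^ (m + 1)
        * (1:Matrix (Fin n) (Fin n) (ZMod (p ^ k))) ^ (p - (m+1))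
        * ((p.choose (m+1) : ℕ) : Matrix (Fin n) (Fin n) (ZMod (p ^ k)))
      = ((p.choose (m+1) * p ^ (i * (m+1)) : ℕ) : ZMod (p ^ k)) • M ^ (m + 1) := by
    rw [one_pow, mul_one, smul_pow,
      ← (Nat.cast_commute (p.choose (m+1)) ((((p : ZMod (p ^ k)) ^ i)^(m+1)) • M ^ (m+1))).eq,
      ← nsmul_eq_mul, ← Nat.cast_smul_eq_nsmul (ZMod (p ^ k)), smul_smul]
    congr 1
    push_cast [← pow_mul]
    ring
  rw [e1, hd, Nat.mul_div_cancel_left _ (pow_pos hp.pos (i+1))]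
  push_cast
  rw [mul_smul]

lemma stmt9_one_add_p_pow_eq_one {n p k : ℕ} (hp : p.Prime) (hk : 1 ≤ k)
    (M : Matrix (Fin n) (Fin n) (ZMod (p ^ k))) :
    (1 + (p : ZMod (p ^ k)) • M) ^ (p ^ (k - 1)) = 1 := by
  have key : ∀ e : ℕ, ∃ M', (1 + (p : ZMod (p ^ k)) • M) ^ (p ^ e)
      = 1 + ((p : ZMod (p ^ k)) ^ (1 + e)) • M' := by
    intro e
    induction e with
    | zero => exact ⟨M, by simp⟩
    | succ e ih =>
      obtain ⟨M', hM'⟩ := ih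
      obtain ⟨M'', hM''⟩ := stmt9_one_add_pow_p hp (1 + e) (by omega) M'
      exact ⟨M'', by rw [pow_succ, pow_mul, hM', hM'', show 1+e+1 = 1+(e+1) by ring]⟩
  obtain ⟨M', hM'⟩ := key (k - 1)
  rw [hM', show 1 + (k-1) = k by omega]
  have h0 : ((p : ZMod (p ^ k)) ^ k) = 0 := by
    rw [← Nat.cast_pow, ZMod.natCast_self]
  rw [h0, zero_smul, add_zero]

lemma stmt9_aux_div {p k : ℕ} (hk : k ≠ 0) [NeZero (p ^ k)] (x : ZMod (p ^ k))
    (hx : ZMod.castHom (dvd_pow_self p hk) (ZMod p) x = 0) :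
    (p : ZMod (p ^ k)) * ((x.val / p : ℕ) : ZMod (p ^ k)) = x := by
  have h1 : ((x.val : ℕ) : ZMod p) = 0 := by
    rwa [ZMod.natCast_val, ← ZMod.castHom_apply (h := dvd_pow_self p hk)]
  have h2 : p ∣ x.val := (ZMod.natCast_eq_zero_iff _ _).mp h1
  rw [show (p : ZMod (p^k)) = ((p:ℕ) : ZMod (p^k)) by norm_cast, ← Nat.cast_mul,
    Nat.mul_div_cancel' h2]
  exact ZMod.natCast_rightInverse x

/-- Any element of the kernel of `redPi` has order dividing `p ^ (k-1)`. -/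
lemma stmt9_ker_pow {p k n : ℕ} (hp : p.Prime) (hk : 1 ≤ k) [NeZero (p ^ k)]
    (B : Matrix (Fin n) (Fin n) (ZMod (p ^ k)))
    (g : OGroup B) (hg : redPi p k (by omega) B g = 1) :
    g ^ (p ^ (k - 1)) = 1 := by
  set f := ZMod.castHom (dvd_pow_self p (show k ≠ 0 by omega)) (ZMod p) with hf
  have h1 : ((g : (Matrix (Fin n) (Fin n) (ZMod (p ^ k)))ˣ) : Matrix (Fin n) (Fin n) (ZMod (p ^ k))).map f = 1 := by
    have h := congrArg (fun x : ↥(OGroup (B.map f)) =>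
      ((x : (Matrix (Fin n) (Fin n) (ZMod p))ˣ) : Matrix (Fin n) (Fin n) (ZMod p))) hg
    exact h
  set A := ((g : (Matrix (Fin n) (Fin n) (ZMod (p ^ k)))ˣ) : Matrix (Fin n) (Fin n) (ZMod (p ^ k))) with hA
  set D := A - 1 with hD
  have hDf : ∀ i j, f (D i j) = 0 := by
    intro i j
    have : D.map f = 0 := by
      rw [hD, Matrix.map_sub ⇑f (fun a b => map_sub f a b), h1]
      simp
    have := congrFun (congrFun this i) j
    simpa [Matrix.map_apply] using this
  set E : Matrix (Fin n) (Fin n) (ZMod (p ^ k)) := fun i j => (((D i j).val / p : ℕ) : ZMod (p ^ k)) with hE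
  have hPE : (p : ZMod (p ^ k)) • E = D := by
    ext i j
    exact stmt9_aux_div (show k ≠ 0 by omega) (D i j) (hDf i j)
  have hA1 : A = 1 + (p : ZMod (p ^ k)) • E := by
    rw [hPE, hD]; abel
  have hpow : A ^ (p ^ (k - 1)) = 1 := by
    rw [hA1]; exact stmt9_one_add_p_pow_eq_one hp hk E
  have hu : ((g : (Matrix (Fin n) (Fin n) (ZMod (p ^ k)))ˣ)) ^ (p ^ (k - 1)) = 1 := by
    apply Units.ext
    rw [Units.val_pow_eq_pow_val, Units.val_one]
    exact hpow
  exact Subtype.ext (by push_cast; exact hu)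


lemma stmt9_surj {p k n : ℕ} (hp : p.Prime) (hp2 : p ≠ 2) (hk : 1 ≤ k) [NeZero (p ^ k)]
    (B : Matrix (Fin n) (Fin n) (ZMod (p ^ k))) (hsymm : B.IsSymm) (hdet : IsUnit B.det) :
    Function.Surjective (redPi p k (by omega) B) := by
  haveI : NeZero p := ⟨hp.pos.ne'⟩
  set f := ZMod.castHom (dvd_pow_self p (show k ≠ 0 by omega)) (ZMod p) with hf
  intro t
  set A₀ := ((t : (Matrix (Fin n) (Fin n) (ZMod p))ˣ) : Matrix (Fin n) (Fin n) (ZMod p)) with hA₀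
  have ht : A₀ᵀ * B.map f * A₀ = B.map f := t.2
  have main : ∀ j, 1 ≤ j → ∃ A E : Matrix (Fin n) (Fin n) (ZMod (p ^ k)),
      A.map f = A₀ ∧ E.IsSymm ∧ Aᵀ * B * A = B + ((p : ZMod (p ^ k)) ^ j) • E := by
    intro j hj
    induction j with
    | zero => omega
    | succ j ih =>
      rcases Nat.eq_zero_or_pos j with h0 | hpos
      · -- base case: j + 1 = 1
        subst h0
        set A : Matrix (Fin n) (Fin n) (ZMod (p ^ k)) :=
          A₀.map (fun a => ((a.val : ℕ) : ZMod (p ^ k))) with hA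
        have hAf : A.map f = A₀ := by
          ext i j
          simp only [hA, Matrix.map_apply, map_natCast]
          exact ZMod.natCast_rightInverse (A₀ i j)
        set D := Aᵀ * B * A - B with hD
        have hDmap : D.map f = 0 := by
          rw [hD, Matrix.map_sub ⇑f (fun a b => map_sub f a b), Matrix.map_mul, Matrix.map_mul,
            Matrix.transpose_map, hAf, ht, sub_self]
        have hDf : ∀ i j, f (D i j) = 0 := by
          intro i j
          have := congrFun (congrFun hDmap i) j
          simpa [Matrix.map_apply] using this
        have hDsymm : Dᵀ = D := by
          rw [hD]
          simp only [transpose_sub, transpose_mul, transpose_transpose, hsymm.eq]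
          rw [Matrix.mul_assoc]
        refine ⟨A, fun i j => (((D i j).val / p : ℕ) : ZMod (p ^ k)), hAf, ?_, ?_⟩
        · show Matrix.IsSymm _
          ext i j
          show (((D j i).val / p : ℕ) : ZMod (p ^ k)) = (((D i j).val / p : ℕ) : ZMod (p ^ k))
          have hDji := congrFun (congrFun hDsymm j) i
          rw [Matrix.transpose_apply] at hDji
          rw [← hDji]
        · rw [pow_one]
          have hPE : (p : ZMod (p ^ k)) • (fun i j => (((D i j).val / p : ℕ) : ZMod (p ^ k)) :
              Matrix (Fin n) (Fin n) (ZMod (p ^ k))) = D := by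
            ext i j
            simpa [Matrix.smul_apply] using stmt9_aux_div (show k ≠ 0 by omega) (D i j) (hDf i j)
          refine Eq.trans ?_ (congrArg (B + ·) hPE.symm)
          rw [hD]
          abel
      · -- inductive step
        obtain ⟨A, E, hAf, hEs, hABA⟩ := ih hpos
        set c : ZMod (p ^ k) := (p : ZMod (p ^ k)) ^ j with hc
        -- a square root of 1/4... just the inverse of 2
        have h2u : IsUnit (2 : ZMod (p ^ k)) := by
          rw [show (2 : ZMod (p ^ k)) = ((2 : ℕ) : ZMod (p ^ k)) by norm_cast,
            ZMod.isUnit_iff_coprime]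
          exact Nat.Coprime.pow_right k ((Nat.coprime_primes Nat.prime_two hp).mpr (Ne.symm hp2))
        obtain ⟨u, hu⟩ := h2u
        set v : ZMod (p ^ k) := ((u⁻¹ : (ZMod (p ^ k))ˣ) : ZMod (p ^ k)) with hv
        have hv2 : 2 * v = 1 := by rw [hv, ← hu, ← Units.val_mul, mul_inv_cancel, Units.val_one]
        set X : Matrix (Fin n) (Fin n) (ZMod (p ^ k)) := -(v • (B⁻¹ * E)) with hX
        have hBinvT : B⁻¹ᵀ = B⁻¹ := by rw [transpose_nonsing_inv, hsymm.eq]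
        have hXT : Xᵀ = -(v • (E * B⁻¹)) := by
          rw [hX, transpose_neg, transpose_smul, transpose_mul, hBinvT, hEs.eq]
        have hXcond : E + B * X + Xᵀ * B = 0 := by
          have e1 : B * X = -(v • E) := by
            rw [hX, Matrix.mul_neg, Matrix.mul_smul, ← Matrix.mul_assoc,
              Matrix.mul_nonsing_inv B hdet, Matrix.one_mul]
          have e2 : Xᵀ * B = -(v • E) := by
            rw [hXT, Matrix.neg_mul, Matrix.smul_mul, Matrix.mul_assoc,
              Matrix.nonsing_inv_mul B hdet, Matrix.mul_one]
          rw [e1, e2]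
          have e3 : v • E + v • E = (2 * v) • E := by rw [two_mul, add_smul]
          calc E + -(v • E) + -(v • E) = E - (v • E + v • E) := by abel
            _ = E - (2 * v) • E := by rw [e3]
            _ = 0 := by rw [hv2, one_smul, sub_self]
        have hkey := stmt9_key_identity B A X E c hABA hXcond
        refine ⟨A * (1 + c • X),
          (p : ZMod (p ^ k)) ^ (j - 1) • (E * X + Xᵀ * E + Xᵀ * B * X + c • (Xᵀ * E * X)),
          ?_, ?_, ?_⟩
        · rw [_root_.Matrix.map_mul]
          have h1m : (1 + c • X).map f = 1 := by
            ext a b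
            simp only [Matrix.map_apply, Matrix.add_apply, Matrix.smul_apply, smul_eq_mul,
              map_add, _root_.map_mul]
            have hfc : f c = 0 := by
              rw [hc, map_pow, map_natCast, ZMod.natCast_self, zero_pow (by omega : j ≠ 0)]
            rw [hfc, zero_mul, add_zero]
            by_cases hab : a = b <;> simp [Matrix.one_apply, hab]
          rw [h1m, Matrix.mul_one, hAf]
        · show _ᵀ = _
          rw [transpose_smul]
          congr 1
          simp only [transpose_add, transpose_smul, transpose_mul, transpose_transpose,
            hEs.eq, hsymm.eq, Matrix.mul_assoc]
          abel
        · rw [hkey]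
          congr 1
          rw [smul_smul, hc, ← pow_add, ← pow_add, show j + j = j + 1 + (j - 1) by omega]
  obtain ⟨A, E, hAf, hEs, hABA⟩ := main k hk
  have hpk : ((p : ZMod (p ^ k)) ^ k) = 0 := by rw [← Nat.cast_pow, ZMod.natCast_self]
  rw [hpk, zero_smul, add_zero] at hABA
  have hdetA : IsUnit A.det := by
    have h1 : A.det * B.det * A.det = B.det := by
      have h := congrArg Matrix.det hABA
      rwa [Matrix.det_mul, Matrix.det_mul, Matrix.det_transpose] at h
    have h2 : (A.det * A.det) * B.det = 1 * B.det := by rw [one_mul]; linear_combination h1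
    obtain ⟨w, hw⟩ := hdet
    have h3 : A.det * A.det = 1 := by
      rw [← hw] at h2
      simpa using (Units.mul_left_inj w).mp h2
    exact ⟨⟨A.det, A.det, h3, h3⟩, rfl⟩
  obtain ⟨U, hU⟩ := (Matrix.isUnit_iff_isUnit_det A).mpr hdetA
  have hmem : U ∈ OGroup B := by
    have : ((U : (Matrix (Fin n) (Fin n) (ZMod (p ^ k)))ˣ) :
        Matrix (Fin n) (Fin n) (ZMod (p ^ k)))ᵀ * B * U = B := by rw [hU]; exact hABA
    exact this
  refine ⟨⟨U, hmem⟩, ?_⟩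
  apply Subtype.ext
  apply Units.ext
  show ((U : Matrix (Fin n) (Fin n) (ZMod (p ^ k))).map f) = A₀
  rw [hU]
  exact hAf

theorem stmt9 (p q : ℕ) (hp : p.Prime) (hq : q.Prime) (hp2 : p ≠ 2) (hq2 : q ≠ 2)
    (hpq : p ≠ q) (k : ℕ) (hk : 1 ≤ k) (n : ℕ) (hn : 1 ≤ n)
    (B : Matrix (Fin n) (Fin n) (ZMod (p ^ k))) (hsymm : B.IsSymm) (hdet : IsUnit B.det) :
    ∀ S : Sylow q (OGroup B),
      Set.InjOn (redPi p k (by omega) B) (S : Subgroup (OGroup B)) ∧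
      ∃ T : Sylow q (OGroup (B.map (ZMod.castHom (dvd_pow_self p (by omega : k ≠ 0)) (ZMod p)))),
        (T : Subgroup _) = Subgroup.map (redPi p k (by omega) B) (S : Subgroup (OGroup B)) := by
  haveI : Fact p.Prime := ⟨hp⟩
  haveI : Fact q.Prime := ⟨hq⟩
  haveI : NeZero (p ^ k) := ⟨pow_ne_zero k hp.pos.ne'⟩
  intro S
  constructor
  · intro x hx y hy hxy
    have hz : y⁻¹ * x ∈ (S : Subgroup (OGroup B)) := mul_mem (inv_mem hy) hx
    have h1 : redPi p k (by omega) B (y⁻¹ * x) = 1 := by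
      rw [_root_.map_mul, map_inv, hxy, inv_mul_cancel]
    have h2 : (y⁻¹ * x) ^ (p ^ (k - 1)) = 1 := stmt9_ker_pow hp hk B _ h1
    obtain ⟨m, hm⟩ := S.2 ⟨y⁻¹ * x, hz⟩
    have h3 : (y⁻¹ * x) ^ (q ^ m) = 1 := by
      have h := congrArg (Subtype.val) hm
      push_cast at h
      exact h
    have hdvd1 : orderOf (y⁻¹ * x) ∣ p ^ (k - 1) := orderOf_dvd_of_pow_eq_one h2
    have hdvd2 : orderOf (y⁻¹ * x) ∣ q ^ m := orderOf_dvd_of_pow_eq_one h3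
    have hcop : Nat.Coprime (p ^ (k - 1)) (q ^ m) :=
      Nat.Coprime.pow _ _ ((Nat.coprime_primes hp hq).mpr hpq)
    have hord : orderOf (y⁻¹ * x) = 1 :=
      Nat.dvd_one.mp ((Nat.dvd_gcd hdvd1 hdvd2).trans (dvd_of_eq hcop))
    exact (inv_mul_eq_one.mp (orderOf_eq_one_iff.mp hord)).symm
  · have hsurj : Function.Surjective (redPi p k (by omega) B) :=
      stmt9_surj hp hp2 hk B hsymm hdet
    exact ⟨Sylow.mapSurjective hsurj S, Sylow.coe_mapSurjective hsurj S⟩
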